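/- Let (Q, 𝔪, k) be a local Artinian ring with 𝔪³ = 0 admitting an exact pair of zero divisors (f, g), and assume the minimal number of generators e of 𝔪 is at least 2. Then the length of the ideal (f) equals e, and the length of f𝔪 equals e - 1. -/

import Mathlib

open IsLocalRing

/-- The length of a module, defined as the Krull dimension of its lattice of submodules. -/
noncomputable def moduleLength (Q M : Type) [CommRing Q] [AddCommGroup M] [Module Q M] : ℕ∞ :=
  (Order.krullDim (Submodule Q M)).unbotD 0

/-- The `n`-th coefficient of the Hilbert series of a local ring `Q`,
namely `dim_k (𝔪ⁿ/𝔪ⁿ⁺¹)`, computed as the length over `Q` of `𝔪ⁿ/𝔪ⁿ⁺¹`. -/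
noncomputable def hilbCoeff (Q : Type) [CommRing Q] [IsLocalRing Q] (n : ℕ) : ℕ∞ :=
  moduleLength Q
    (↥(maximalIdeal Q ^ n) ⧸
      (Submodule.comap (maximalIdeal Q ^ n).subtype (maximalIdeal Q ^ (n + 1))))

namespace EZDAux





section Length

variable {Q M : Type*} [CommRing Q] [AddCommGroup M] [Module Q M]

lemma ml_eq (Q M : Type*) [CommRing Q] [AddCommGroup M] [Module Q M] :
    (Order.krullDim (Submodule Q M)).unbotD 0 = Order.height (⊤ : Submodule Q M) := by
  rw [← Order.height_top_eq_krullDim, WithBot.unbotD_coe]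

lemma ml_congr {N : Type*} [AddCommGroup N] [Module Q N] (e : M ≃ₗ[Q] N) :
    Order.height (⊤ : Submodule Q M) = Order.height (⊤ : Submodule Q N) := by
  have h := Order.height_orderIso (Submodule.orderIsoMapComap e) ⊤
  rw [← h]
  congr 1
  simp [Submodule.orderIsoMapComap]

lemma chain_le (N : Submodule Q M) : ∀ (n : ℕ) (p : LTSeries (Submodule Q M)), p.length = n →
    (n : ℕ∞) ≤ Order.height (Submodule.comap N.subtype p.last)
      + Order.height (Submodule.map N.mkQ p.last) := by
  intro n
  induction n with
  | zero => intro p hp; simp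
  | succ n ih =>
    intro p hp
    have hlen : p.length ≠ 0 := by omega
    have h1 : p.eraseLast.length = n := by simp [hp]
    have hlt : p.eraseLast.last < p.last := p.eraseLast_last_rel_last hlen
    have key := ih p.eraseLast h1
    have hc : Submodule.comap N.subtype p.eraseLast.last < Submodule.comap N.subtype p.last
        ∨ Submodule.map N.mkQ p.eraseLast.last < Submodule.map N.mkQ p.last := by
      by_contra hcon
      push_neg at hcon
      obtain ⟨h1', h2'⟩ := hcon
      have hcle : Submodule.comap N.subtype p.eraseLast.last = Submodule.comap N.subtype p.last :=
        ((Submodule.comap_mono hlt.le).lt_or_eq).resolve_left h1'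
      have hmle : Submodule.map N.mkQ p.eraseLast.last = Submodule.map N.mkQ p.last :=
        ((Submodule.map_mono hlt.le).lt_or_eq).resolve_left h2'
      have hinf : p.last ⊓ N ≤ p.eraseLast.last ⊓ N := by
        have h := congrArg (Submodule.map N.subtype) hcle
        rw [Submodule.map_comap_subtype, Submodule.map_comap_subtype] at h
        rw [inf_comm, inf_comm p.eraseLast.last]
        exact h.ge
      have hsup : p.last ⊔ N ≤ p.eraseLast.last ⊔ N := by
        have h := congrArg (Submodule.comap N.mkQ) hmle
        rw [Submodule.comap_map_mkQ, Submodule.comap_map_mkQ] at h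
        rw [sup_comm, sup_comm p.eraseLast.last]
        exact h.ge
      exact hlt.ne (eq_of_le_of_inf_le_of_sup_le hlt.le hinf hsup)
    push_cast
    rcases hc with hc | hc
    · by_cases htop : Order.height (Submodule.comap N.subtype p.last) = ⊤
      · rw [htop, top_add]; exact le_top
      · have hfin : Order.height (Submodule.comap N.subtype p.eraseLast.last) < ⊤ :=
          lt_of_le_of_lt (Order.height_mono hc.le) (lt_top_iff_ne_top.2 htop)
        have hmono := Order.height_strictMono hc hfin
        calc ((n : ℕ∞) + 1)
            ≤ (Order.height (Submodule.comap N.subtype p.eraseLast.last)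
              + Order.height (Submodule.map N.mkQ p.eraseLast.last)) + 1 := by
              exact add_le_add key le_rfl
          _ = (Order.height (Submodule.comap N.subtype p.eraseLast.last) + 1)
              + Order.height (Submodule.map N.mkQ p.eraseLast.last) := add_right_comm _ _ _
          _ ≤ _ := add_le_add (Order.add_one_le_of_lt hmono)
              (Order.height_mono (Submodule.map_mono hlt.le))
    · by_cases htop : Order.height (Submodule.map N.mkQ p.last) = ⊤
      · rw [htop, add_top]; exact le_top
      · have hfin : Order.height (Submodule.map N.mkQ p.eraseLast.last) < ⊤ :=
          lt_of_le_of_lt (Order.height_mono hc.le) (lt_top_iff_ne_top.2 htop)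
        have hmono := Order.height_strictMono hc hfin
        calc ((n : ℕ∞) + 1)
            ≤ (Order.height (Submodule.comap N.subtype p.eraseLast.last)
              + Order.height (Submodule.map N.mkQ p.eraseLast.last)) + 1 := by
              exact add_le_add key le_rfl
          _ = Order.height (Submodule.comap N.subtype p.eraseLast.last)
              + (Order.height (Submodule.map N.mkQ p.eraseLast.last) + 1) := add_assoc _ _ _
          _ ≤ _ := add_le_add (Order.height_mono (Submodule.comap_mono hlt.le))
              (Order.add_one_le_of_lt hmono)

lemma enat_eq_top_of_forall {c : ℕ∞} (h : ∀ k : ℕ, (k : ℕ∞) ≤ c) : c = ⊤ := by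
  cases c with
  | top => rfl
  | coe c => have := h (c + 1); norm_cast at this; omega

lemma enat_add_le_aux {a b c : ℕ∞} (h : ∀ (n m : ℕ), (n : ℕ∞) ≤ a → (m : ℕ∞) ≤ b →
    (n : ℕ∞) + m ≤ c) : a + b ≤ c := by
  have hc : ∀ (n m : ℕ), (n : ℕ∞) ≤ a → (m : ℕ∞) ≤ b → ((n + m : ℕ) : ℕ∞) ≤ c := by
    intro n m hn hm; push_cast; exact h n m hn hm
  cases a with
  | top =>
    have : c = ⊤ := enat_eq_top_of_forall fun k => by simpa using hc k 0 le_top (by simp)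
    simp [this]
  | coe a =>
    cases b with
    | top =>
      have : c = ⊤ := enat_eq_top_of_forall fun k => by simpa using hc 0 k (by simp) le_top
      simp [this]
    | coe b =>
      exact_mod_cast hc a b le_rfl le_rfl

lemma ml_add (N : Submodule Q M) :
    Order.height (⊤ : Submodule Q M) =
      Order.height (⊤ : Submodule Q N) + Order.height (⊤ : Submodule Q (M ⧸ N)) := by
  apply le_antisymm
  · apply Order.height_le
    intro p hp
    have := chain_le N p.length p rfl
    rw [hp] at this
    rwa [Submodule.comap_top, Submodule.map_top, Submodule.range_mkQ] at this
  · apply enat_add_le_aux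
    intro n m hn hm
    -- series in M/N of length m with last = ⊤
    obtain ⟨q, hq_last, hq_len⟩ := Order.exists_series_of_le_height (⊤ : Submodule Q (M ⧸ N)) hm
    have hsurj : Function.Surjective N.mkQ := Submodule.mkQ_surjective N
    have hcstrict : StrictMono (Submodule.comap N.mkQ :
        Submodule Q (M ⧸ N) → Submodule Q M) := Submodule.comap_strictMono_of_surjective hsurj
    set q' : LTSeries (Submodule Q M) := q.map _ hcstrict with hq'
    have hinj : Function.Injective N.subtype := Submodule.injective_subtype N
    have hmstrict : StrictMono (Submodule.map N.subtype :
        Submodule Q N → Submodule Q M) := Submodule.map_strictMono_of_injective hinj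
    have hN : n ≤ Order.height q'.head := by
      refine le_trans hn ?_
      have h1 : Order.height (⊤ : Submodule Q N)
          ≤ Order.height (Submodule.map N.subtype ⊤) :=
        Order.height_le_height_apply_of_strictMono _ hmstrict ⊤
      refine h1.trans (Order.height_mono ?_)
      rw [Submodule.map_subtype_top]
      have : N = Submodule.comap N.mkQ ⊥ := by
        rw [Submodule.comap_bot, Submodule.ker_mkQ]
      rw [this]
      exact Submodule.comap_mono bot_le
    obtain ⟨p, hp_last, hp_len⟩ := Order.exists_series_of_le_height q'.head hN
    have hconn : p.last = q'.head := hp_last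
    have hq'len : q'.length = q.length := rfl
    have hlen : (p.smash q' hconn).length = n + m := by
      simp [RelSeries.smash, hp_len, hq'len, hq_len]
    have hlast : (p.smash q' hconn).last = ⊤ := by
      rw [RelSeries.last_smash]
      show Submodule.comap N.mkQ q.last = ⊤
      rw [hq_last, Submodule.comap_top]
    have := Order.length_le_height_last (p := p.smash q' hconn)
    rw [hlast, hlen] at this
    exact_mod_cast this

end Length

section More
variable {Q M : Type*} [CommRing Q] [AddCommGroup M] [Module Q M]

lemma ml_simple [IsSimpleModule Q M] : Order.height (⊤ : Submodule Q M) = 1 := by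
  apply le_antisymm
  · rw [show (1 : ℕ∞) = ((1 : ℕ) : ℕ∞) by norm_cast, Order.height_le_coe_iff]
    intro y hy
    have hy' : y = ⊥ := (eq_bot_or_eq_top y).resolve_right hy.ne
    subst hy'
    simp
  · rw [Order.height_eq_iSup_lt_height]
    refine le_iSup₂_of_le ⊥ bot_lt_top ?_
    simp

lemma ml_subsingleton [Subsingleton M] : Order.height (⊤ : Submodule Q M) = 0 := by
  rw [Order.height_eq_zero]
  intro b _
  exact le_of_eq (Subsingleton.elim _ _)

lemma ml_ne_top (h : IsFiniteLength Q M) : Order.height (⊤ : Submodule Q M) ≠ ⊤ := by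
  induction h with
  | of_subsingleton => rw [ml_subsingleton]; simp
  | @of_simple_quotient M _ _ N _ _ ih =>
    rw [ml_add N, ml_simple (Q := Q) (M := M ⧸ N)]
    exact WithTop.add_ne_top.mpr ⟨ih, ENat.one_ne_top⟩

end More

section App


variable {Q : Type} [CommRing Q] [IsLocalRing Q]

lemma quot_sub_eq (J K : Ideal Q) (h : Q)
    (hJ : ∀ x ∈ J, ∃ c, c * h = x)
    (hmul : ∀ c ∈ maximalIdeal Q, c * h ∈ K)
    (S : Submodule Q (↥J ⧸ Submodule.comap J.subtype K)) : S = ⊥ ∨ S = ⊤ := by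
  by_cases hS : S = ⊥
  · exact Or.inl hS
  right
  obtain ⟨v, hvS, hv0⟩ : ∃ v ∈ S, v ≠ 0 := by
    by_contra hcon
    push_neg at hcon
    refine hS (le_antisymm (fun x hx => ?_) bot_le)
    simpa using hcon x hx
  obtain ⟨x, rfl⟩ := Submodule.Quotient.mk_surjective _ v
  obtain ⟨c, hc⟩ := hJ x.1 x.2
  have hcu : IsUnit c := by
    by_contra hcu
    apply hv0
    rw [Submodule.Quotient.mk_eq_zero]
    have : c ∈ maximalIdeal Q := (IsLocalRing.mem_maximalIdeal c).mpr hcu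
    have hK : (x : Q) ∈ K := hc ▸ hmul c this
    exact hK
  obtain ⟨u, hu⟩ := hcu
  rw [eq_top_iff]
  rintro w -
  obtain ⟨y, rfl⟩ := Submodule.Quotient.mk_surjective _ w
  obtain ⟨d, hd⟩ := hJ y.1 y.2
  have hkey : (Submodule.Quotient.mk y : ↥J ⧸ Submodule.comap J.subtype K)
      = (d * ↑u⁻¹) • (Submodule.Quotient.mk x : ↥J ⧸ Submodule.comap J.subtype K) := by
    rw [← Submodule.Quotient.mk_smul]
    congr 1
    ext
    show (y : Q) = d * ↑u⁻¹ * (x : Q)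
    rw [← hd, ← hc, ← hu]
    calc d * h = d * ((↑u⁻¹ * ↑u) * h) := by rw [Units.inv_mul, one_mul]
      _ = d * ↑u⁻¹ * (↑u * h) := by ring
  rw [hkey]
  exact S.smul_mem _ hvS

lemma quot_height_le_one (J K : Ideal Q) (h : Q)
    (hJ : ∀ x ∈ J, ∃ c, c * h = x)
    (hmul : ∀ c ∈ maximalIdeal Q, c * h ∈ K) :
    Order.height (⊤ : Submodule Q (↥J ⧸ Submodule.comap J.subtype K)) ≤ 1 := by
  rw [show (1 : ℕ∞) = ((1 : ℕ) : ℕ∞) by norm_cast, Order.height_le_coe_iff]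
  intro y hy
  have hy' : y = ⊥ := (quot_sub_eq J K h hJ hmul y).resolve_right hy.ne
  subst hy'
  simp

lemma quot_height_eq_one (J K : Ideal Q) (h : Q)
    (hJ : ∀ x ∈ J, ∃ c, c * h = x) (hhJ : h ∈ J) (hhK : h ∉ K)
    (hmul : ∀ c ∈ maximalIdeal Q, c * h ∈ K) :
    Order.height (⊤ : Submodule Q (↥J ⧸ Submodule.comap J.subtype K)) = 1 := by
  apply le_antisymm (quot_height_le_one J K h hJ hmul)
  have hne : (Submodule.Quotient.mk (⟨h, hhJ⟩ : ↥J) :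
      ↥J ⧸ Submodule.comap J.subtype K) ≠ 0 := by
    rw [ne_eq, Submodule.Quotient.mk_eq_zero]
    exact fun hcmem => hhK hcmem
  have hbt : (⊥ : Submodule Q (↥J ⧸ Submodule.comap J.subtype K)) < ⊤ := by
    refine lt_of_le_of_ne bot_le fun hbot => ?_
    have hmem : (Submodule.Quotient.mk (⟨h, hhJ⟩ : ↥J) :
        ↥J ⧸ Submodule.comap J.subtype K) ∈ (⊥ : Submodule Q _) := hbot ▸ Submodule.mem_top
    exact hne ((Submodule.mem_bot Q).mp hmem)
  rw [Order.height_eq_iSup_lt_height]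
  refine le_iSup₂_of_le ⊥ hbt ?_
  simp


end App

lemma ml_ne_top_of_torsion {Q : Type} [CommRing Q] [IsLocalRing Q] (V : Type)
    [AddCommGroup V] [Module Q V] [IsArtinian Q V]
    (htor : Module.IsTorsionBySet Q V ((maximalIdeal Q : Ideal Q) : Set Q)) :
    Order.height (⊤ : Submodule Q V) ≠ ⊤ := by
  letI : Module (Q ⧸ maximalIdeal Q) V := htor.module
  haveI : IsScalarTower Q (Q ⧸ maximalIdeal Q) V := htor.isScalarTower
  letI : Field (Q ⧸ maximalIdeal Q) := Ideal.Quotient.field _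
  haveI hart : IsArtinian (Q ⧸ maximalIdeal Q) V := isArtinian_of_tower Q inferInstance
  haveI hnoe : IsNoetherian (Q ⧸ maximalIdeal Q) V :=
    (IsSemisimpleModule.finite_tfae.out 2 1).mp hart
  have hfl : IsFiniteLength (Q ⧸ maximalIdeal Q) V :=
    isFiniteLength_iff_isNoetherian_isArtinian.mpr ⟨hnoe, hart⟩
  let Φ : Submodule Q V → Submodule (Q ⧸ maximalIdeal Q) V := fun S =>
    { carrier := S
      add_mem' := fun ha hb => S.add_mem ha hb
      zero_mem' := S.zero_mem
      smul_mem' := by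
        intro c v hv
        obtain ⟨c, rfl⟩ := Ideal.Quotient.mk_surjective c
        show (Ideal.Quotient.mk (maximalIdeal Q) c) • v ∈ S
        rw [htor.mk_smul]
        exact S.smul_mem c hv }
  have hmono : StrictMono Φ := by
    intro S T hST
    refine lt_of_le_of_ne (fun x hx => hST.le hx) fun hEq => hST.ne ?_
    apply SetLike.coe_injective
    exact congrArg (fun (U : Submodule (Q ⧸ maximalIdeal Q) V) => (U : Set V)) hEq
  have h1 : Order.height (⊤ : Submodule Q V) ≤ Order.height (Φ ⊤) :=
    Order.height_le_height_apply_of_strictMono Φ hmono ⊤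
  have h2 : Order.height (Φ ⊤) ≤ Order.height (⊤ : Submodule (Q ⧸ maximalIdeal Q) V) :=
    Order.height_mono le_top
  intro hcon
  exact ml_ne_top hfl (top_le_iff.mp ((hcon ▸ (h1.trans h2)) : (⊤ : ℕ∞) ≤ _))


section Bridge

lemma moduleLength_eq_height (Q M : Type) [CommRing Q] [AddCommGroup M] [Module Q M] :
    moduleLength Q M = Order.height (⊤ : Submodule Q M) := ml_eq Q M

variable {Q : Type} [CommRing Q]

lemma ml_add_ideal (J K : Ideal Q) (hKJ : K ≤ J) :
    Order.height (⊤ : Submodule Q ↥J) =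
      Order.height (⊤ : Submodule Q ↥K) +
      Order.height (⊤ : Submodule Q (↥J ⧸ Submodule.comap J.subtype K)) := by
  rw [ml_add (Submodule.comap J.subtype K)]
  congr 1
  exact ml_congr (Submodule.comapSubtypeEquivOfLe hKJ)

variable [IsLocalRing Q]

lemma hilb_le_one (h : Q) (hpr : maximalIdeal Q = Ideal.span {h}) : hilbCoeff Q 1 ≤ 1 := by
  have heq : hilbCoeff Q 1 = Order.height (⊤ : Submodule Q (↥(maximalIdeal Q ^ 1) ⧸
      Submodule.comap (maximalIdeal Q ^ 1).subtype (maximalIdeal Q ^ (1 + 1)))) :=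
    moduleLength_eq_height _ _
  rw [heq]
  apply quot_height_le_one _ _ h
  · intro x hx
    rw [pow_one, hpr, Ideal.mem_span_singleton] at hx
    obtain ⟨c, hc⟩ := hx
    exact ⟨c, by rw [hc]; ring⟩
  · intro c hc
    have hh : h ∈ maximalIdeal Q ^ 1 := by
      rw [pow_one, hpr]; exact Ideal.mem_span_singleton_self h
    have hmem : h * c ∈ maximalIdeal Q ^ (1 + 1) := by
      rw [pow_succ]; exact Ideal.mul_mem_mul hh hc
    rwa [mul_comm] at hmem

end Bridge

end EZDAux

open EZDAux

/-- Let `(Q,𝔪,k)` be a local Artinian ring with `𝔪³ = 0` admitting an exact pair of zero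
divisors `(f,g)`, and assume the minimal number of generators `e` of `𝔪` (i.e.
`dim_k 𝔪/𝔪²`) is at least `2`.  Then `ℓ((f)) = e` and `ℓ(f𝔪) = e - 1`. -/
theorem length_of_exact_zero_divisor_ideal
    (Q : Type) [CommRing Q] [IsLocalRing Q] [IsArtinianRing Q]
    (h3 : maximalIdeal Q ^ 3 = ⊥)
    (e : ℕ) (he : hilbCoeff Q 1 = e) (he2 : 2 ≤ e)
    (f g : Q) (hf : f ≠ 0) (hg : g ≠ 0)
    (hannf : ∀ x : Q, x * f = 0 ↔ x ∈ Ideal.span {g})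
    (hanng : ∀ x : Q, x * g = 0 ↔ x ∈ Ideal.span {f}) :
    moduleLength Q ↥(Ideal.span {f}) = (e : ℕ∞) ∧
      moduleLength Q ↥(Ideal.span {f} * maximalIdeal Q) = ((e - 1 : ℕ) : ℕ∞) := by
  have hfg : f * g = 0 := (hanng f).mpr (Ideal.mem_span_singleton_self f)
  have hgf : g * f = 0 := (hannf g).mpr (Ideal.mem_span_singleton_self g)
  have hfm : f ∈ maximalIdeal Q := by
    rw [IsLocalRing.mem_maximalIdeal]
    rintro ⟨u, hu⟩
    apply hg
    calc g = g * f * ↑u⁻¹ := by rw [← hu, mul_assoc, Units.mul_inv, mul_one]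
      _ = 0 := by rw [hgf, zero_mul]
  have hgm : g ∈ maximalIdeal Q := by
    rw [IsLocalRing.mem_maximalIdeal]
    rintro ⟨u, hu⟩
    apply hf
    calc f = f * g * ↑u⁻¹ := by rw [← hu, mul_assoc, Units.mul_inv, mul_one]
      _ = 0 := by rw [hfg, zero_mul]
  have hFm : Ideal.span {f} ≤ maximalIdeal Q := by
    rw [Ideal.span_le, Set.singleton_subset_iff]; exact hfm
  have hGm : Ideal.span {g} ≤ maximalIdeal Q := by
    rw [Ideal.span_le, Set.singleton_subset_iff]; exact hgm
  have hsq : ∀ x ∈ maximalIdeal Q, ∀ y ∈ maximalIdeal Q, x * y ∈ maximalIdeal Q ^ 2 := by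
    intro x hx y hy
    rw [sq]
    exact Ideal.mul_mem_mul hx hy
  have h30 : ∀ x ∈ maximalIdeal Q ^ 2, ∀ y ∈ maximalIdeal Q, x * y = 0 := by
    intro x hx y hy
    have hmem : x * y ∈ maximalIdeal Q ^ 3 := by
      rw [pow_succ]
      exact Ideal.mul_mem_mul hx hy
    rw [h3] at hmem
    simpa using hmem
  have hprin : ∀ h : Q, maximalIdeal Q ≠ Ideal.span {h} := by
    intro h hpr
    have hle : hilbCoeff Q 1 ≤ 1 := hilb_le_one h hpr
    rw [he] at hle
    have : e ≤ 1 := by exact_mod_cast hle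
    omega
  have hgm2 : g ∉ maximalIdeal Q ^ 2 := by
    intro hgm2
    refine hprin f (le_antisymm (fun x hx => ?_) hFm)
    rw [← hanng x, mul_comm]
    exact h30 g hgm2 x hx
  have hfm2 : f ∉ maximalIdeal Q ^ 2 := by
    intro hfm2
    refine hprin g (le_antisymm (fun x hx => ?_) hGm)
    rw [← hannf x, mul_comm]
    exact h30 f hfm2 x hx
  have hm2G : maximalIdeal Q ^ 2 ≤ Ideal.span {g} := fun x hx =>
    (hannf x).mp (h30 x hx f hfm)
  have hFM2 : Ideal.span {f} * maximalIdeal Q ≤ maximalIdeal Q ^ 2 :=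
    Ideal.mul_le.mpr fun a ha b hb => hsq a (hFm ha) b hb
  have hFMF : Ideal.span {f} * maximalIdeal Q ≤ Ideal.span {f} :=
    Ideal.mul_le.mpr fun a ha b _ => Ideal.mul_mem_right b _ ha
  have hspanf : ∀ x ∈ Ideal.span {f}, ∃ c, c * f = x := by
    intro x hx
    rw [Ideal.mem_span_singleton] at hx
    obtain ⟨c, hc⟩ := hx
    exact ⟨c, by rw [hc]; ring⟩
  have hspang : ∀ x ∈ Ideal.span {g}, ∃ c, c * g = x := by
    intro x hx
    rw [Ideal.mem_span_singleton] at hx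
    obtain ⟨c, hc⟩ := hx
    exact ⟨c, by rw [hc]; ring⟩
  -- the Hilbert coefficient as a height
  have he' : Order.height (⊤ : Submodule Q (↥(maximalIdeal Q) ⧸
      Submodule.comap (maximalIdeal Q).subtype (maximalIdeal Q ^ 2))) = (e : ℕ∞) := by
    have he2' : moduleLength Q (↥(maximalIdeal Q ^ 1) ⧸
        Submodule.comap (maximalIdeal Q ^ 1).subtype (maximalIdeal Q ^ (1 + 1))) = (e : ℕ∞) := he
    rw [moduleLength_eq_height] at he2'
    rw [show (1 + 1 : ℕ) = 2 from rfl, pow_one (maximalIdeal Q)] at he2'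
    exact he2'
  -- Equation A : ℓ(𝔪) = ℓ(𝔪²) + e
  have eqA : Order.height (⊤ : Submodule Q ↥(maximalIdeal Q)) =
      Order.height (⊤ : Submodule Q ↥(maximalIdeal Q ^ 2)) + (e : ℕ∞) := by
    rw [ml_add_ideal (maximalIdeal Q) (maximalIdeal Q ^ 2)
      (Ideal.pow_le_self two_ne_zero), he']
  -- Equation B : ℓ((g)) = ℓ(𝔪²) + 1
  have eqB : Order.height (⊤ : Submodule Q ↥(Ideal.span {g})) =
      Order.height (⊤ : Submodule Q ↥(maximalIdeal Q ^ 2)) + 1 := by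
    rw [ml_add_ideal (Ideal.span {g}) (maximalIdeal Q ^ 2) hm2G,
      quot_height_eq_one _ _ g hspang (Ideal.mem_span_singleton_self g) hgm2
        (fun c hc => hsq c hc g hgm)]
  -- Equation C : ℓ(𝔪) = ℓ((g)) + ℓ(f𝔪)
  let φ : ↥(maximalIdeal Q) →ₗ[Q] ↥(Ideal.span {f} * maximalIdeal Q) :=
    { toFun := fun x => ⟨f * x.1, Ideal.mul_mem_mul (Ideal.mem_span_singleton_self f) x.2⟩
      map_add' := fun x y => by ext; simp [mul_add]
      map_smul' := fun c x => by ext; simp [smul_eq_mul]; ring }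
  have hker : LinearMap.ker φ =
      Submodule.comap (maximalIdeal Q).subtype (Ideal.span {g}) := by
    ext x
    simp only [LinearMap.mem_ker, Submodule.mem_comap]
    constructor
    · intro hx
      have hval : f * x.1 = 0 := congrArg Subtype.val hx
      rw [mul_comm] at hval
      exact (hannf x.1).mp hval
    · intro hx
      exact Subtype.ext (show f * x.1 = 0 by rw [mul_comm]; exact (hannf x.1).mpr hx)
  have hsurjφ : Function.Surjective φ := by
    rintro ⟨y, hy⟩
    rw [Ideal.mem_span_singleton_mul] at hy
    obtain ⟨z, hz, hzy⟩ := hy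
    exact ⟨⟨z, hz⟩, Subtype.ext hzy⟩
  have eqC : Order.height (⊤ : Submodule Q ↥(maximalIdeal Q)) =
      Order.height (⊤ : Submodule Q ↥(Ideal.span {g})) +
      Order.height (⊤ : Submodule Q ↥(Ideal.span {f} * maximalIdeal Q)) := by
    rw [ml_add (LinearMap.ker φ)]
    congr 1
    · rw [hker]
      exact ml_congr (Submodule.comapSubtypeEquivOfLe hGm)
    · exact ml_congr (φ.quotKerEquivOfSurjective hsurjφ)
  -- Equation D : ℓ((f)) = ℓ(f𝔪) + 1
  have eqD : Order.height (⊤ : Submodule Q ↥(Ideal.span {f})) =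
      Order.height (⊤ : Submodule Q ↥(Ideal.span {f} * maximalIdeal Q)) + 1 := by
    rw [ml_add_ideal (Ideal.span {f}) (Ideal.span {f} * maximalIdeal Q) hFMF,
      quot_height_eq_one _ _ f hspanf (Ideal.mem_span_singleton_self f)
        (fun hc => hfm2 (hFM2 hc))
        (fun c hc => by
          rw [mul_comm c f]
          exact Ideal.mul_mem_mul (Ideal.mem_span_singleton_self f) hc)]
  -- finiteness of ℓ(𝔪²)
  have htor : Module.IsTorsionBySet Q ↥(maximalIdeal Q ^ 2)
      ((maximalIdeal Q : Ideal Q) : Set Q) := by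
    intro v c
    apply Subtype.ext
    show (c : Q) * (v : Q) = 0
    rw [mul_comm]
    exact h30 v.1 v.2 c c.2
  have sfin : Order.height (⊤ : Submodule Q ↥(maximalIdeal Q ^ 2)) ≠ ⊤ :=
    ml_ne_top_of_torsion _ htor
  -- arithmetic
  have h1 : Order.height (⊤ : Submodule Q ↥(maximalIdeal Q ^ 2)) + (e : ℕ∞) =
      Order.height (⊤ : Submodule Q ↥(maximalIdeal Q ^ 2)) +
      (1 + Order.height (⊤ : Submodule Q ↥(Ideal.span {f} * maximalIdeal Q))) := by
    rw [← add_assoc, ← eqB, ← eqC, ← eqA]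
  have he1a : (e : ℕ∞) =
      1 + Order.height (⊤ : Submodule Q ↥(Ideal.span {f} * maximalIdeal Q)) :=
    WithTop.add_left_cancel sfin h1
  have hcast : (e : ℕ∞) = 1 + ((e - 1 : ℕ) : ℕ∞) := by
    have : e = 1 + (e - 1) := by omega
    exact_mod_cast congrArg (Nat.cast : ℕ → ℕ∞) this
  have ha : Order.height (⊤ : Submodule Q ↥(Ideal.span {f} * maximalIdeal Q)) =
      ((e - 1 : ℕ) : ℕ∞) :=
    WithTop.add_left_cancel (by simp : (1 : ℕ∞) ≠ ⊤) (he1a.symm.trans hcast)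
  constructor
  · rw [moduleLength_eq_height, eqD, ha]
    have : (e - 1) + 1 = e := by omega
    exact_mod_cast congrArg (Nat.cast : ℕ → ℕ∞) this
  · rw [moduleLength_eq_height]
    exact ha
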